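/- For every even n ≥ 8, the reverse permutation R_n can be sorted with LRE in exactly (3n² − 20n + 72)/4 moves; that is, R_n is a product of (3n² − 20n + 72)/4 elements of G. -/

import Mathlib

namespace LRE

variable {n : ℕ}

lemma sigma_val' (σ : Equiv.Perm (Fin n))
    (hσ : ∀ i : Fin n, (σ i : ℕ) = ((i : ℕ) + 1) % n) (i : Fin n) :
    (σ i : ℕ) = if (i : ℕ) + 1 = n then 0 else (i : ℕ) + 1 := by
  have hi : (i : ℕ) < n := i.isLt
  rw [hσ]
  split_ifs with h
  · rw [h, Nat.mod_self]
  · exact Nat.mod_eq_of_lt (by omega)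

lemma sigmainv_val (σ : Equiv.Perm (Fin n))
    (hσ : ∀ i : Fin n, (σ i : ℕ) = ((i : ℕ) + 1) % n) (i : Fin n) :
    (σ⁻¹ i : ℕ) = if (i : ℕ) = 0 then n - 1 else (i : ℕ) - 1 := by
  have h1 : σ (σ⁻¹ i) = i := Equiv.apply_symm_apply σ i
  have h2 := sigma_val' σ hσ (σ⁻¹ i)
  rw [h1] at h2
  have hx : ((σ⁻¹ i : Fin n) : ℕ) < n := (σ⁻¹ i).isLt
  have hi : (i : ℕ) < n := i.isLt
  split_ifs at h2 ⊢ with h3 h4 h4 <;> omega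

lemma sigma_pow_val (σ : Equiv.Perm (Fin n))
    (hσ : ∀ i : Fin n, (σ i : ℕ) = ((i : ℕ) + 1) % n) :
    ∀ k, k ≤ n → ∀ i : Fin n,
      ((σ ^ k) i : ℕ) = if (i : ℕ) + k < n then (i : ℕ) + k else (i : ℕ) + k - n := by
  intro k
  induction k with
  | zero => intro _ i; simp [i.isLt]
  | succ k ih =>
      intro hk i
      have hi : (i : ℕ) < n := i.isLt
      rw [pow_succ', Equiv.Perm.mul_apply]
      have h1 := ih (by omega) i
      have h2 := sigma_val' σ hσ ((σ ^ k) i)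
      rw [h1] at h2
      rw [h2]
      split_ifs <;> omega

lemma sigmainv_pow_val (σ : Equiv.Perm (Fin n))
    (hσ : ∀ i : Fin n, (σ i : ℕ) = ((i : ℕ) + 1) % n) :
    ∀ k, k ≤ n → ∀ i : Fin n,
      ((σ⁻¹ ^ k) i : ℕ) = if (i : ℕ) < k then (i : ℕ) + n - k else (i : ℕ) - k := by
  intro k
  induction k with
  | zero => intro _ i; simp
  | succ k ih =>
      intro hk i
      have hi : (i : ℕ) < n := i.isLt
      rw [pow_succ', Equiv.Perm.mul_apply]
      have h1 := ih (by omega) i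
      have h2 := sigmainv_val σ hσ ((σ⁻¹ ^ k) i)
      rw [h1] at h2
      rw [h2]
      have hx : (((σ⁻¹ ^ k) i : Fin n) : ℕ) < n := ((σ⁻¹ ^ k) i).isLt
      rw [h1] at hx
      split_ifs at * <;> omega


lemma stau_val (hn : 8 ≤ n) (σ τ : Equiv.Perm (Fin n))
    (hσ : ∀ i : Fin n, (σ i : ℕ) = ((i : ℕ) + 1) % n)
    (hτ : ∀ i : Fin n, (τ i : ℕ) =
      if (i : ℕ) = 0 then 1 else if (i : ℕ) = 1 then 0 else (i : ℕ)) (i : Fin n) :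
    ((σ * τ) i : ℕ) = if (i : ℕ) = 1 then 1 else if (i : ℕ) = 0 then 2
      else if (i : ℕ) + 1 = n then 0 else (i : ℕ) + 1 := by
  have hi : (i : ℕ) < n := i.isLt
  rw [Equiv.Perm.mul_apply]
  have ht := hτ i
  have h2 := sigma_val' σ hσ (τ i)
  rw [h2]
  have hti : (τ i : ℕ) < n := (τ i).isLt
  split_ifs at ht ⊢ <;> omega

lemma btau_val (hn : 8 ≤ n) (σ τ : Equiv.Perm (Fin n))
    (hσ : ∀ i : Fin n, (σ i : ℕ) = ((i : ℕ) + 1) % n)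
    (hτ : ∀ i : Fin n, (τ i : ℕ) =
      if (i : ℕ) = 0 then 1 else if (i : ℕ) = 1 then 0 else (i : ℕ)) (i : Fin n) :
    ((σ⁻¹ * τ) i : ℕ) = if (i : ℕ) = 0 then 0 else if (i : ℕ) = 1 then n - 1
      else (i : ℕ) - 1 := by
  have hi : (i : ℕ) < n := i.isLt
  rw [Equiv.Perm.mul_apply]
  have ht := hτ i
  have h2 := sigmainv_val σ hσ (τ i)
  rw [h2]
  have hti : (τ i : ℕ) < n := (τ i).isLt
  split_ifs at ht ⊢ <;> omega

lemma U_val (hn : 8 ≤ n) (σ τ : Equiv.Perm (Fin n))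
    (hσ : ∀ i : Fin n, (σ i : ℕ) = ((i : ℕ) + 1) % n)
    (hτ : ∀ i : Fin n, (τ i : ℕ) =
      if (i : ℕ) = 0 then 1 else if (i : ℕ) = 1 then 0 else (i : ℕ)) :
    ∀ j, 1 ≤ j → j ≤ n - 2 → ∀ i : Fin n,
      (((σ * τ) ^ j) i : ℕ) =
        if (i : ℕ) = 1 then 1 else if (i : ℕ) = 0 then j + 1
        else if (i : ℕ) + j ≤ n - 1 then (i : ℕ) + j
        else if (i : ℕ) + j = n then 0 else (i : ℕ) + j - (n - 1) := by
  intro j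
  induction j with
  | zero => omega
  | succ j ih =>
      intro _ hj i
      have hi : (i : ℕ) < n := i.isLt
      rcases Nat.eq_zero_or_pos j with hj0 | hj1
      · subst hj0
        rw [pow_one]
        have h := stau_val hn σ τ hσ hτ i
        rw [h]; split_ifs <;> omega
      · rw [pow_succ', Equiv.Perm.mul_apply]
        have h1 := ih hj1 (by omega) i
        have h2 := stau_val hn σ τ hσ hτ (((σ * τ) ^ j) i)
        have hx : ((((σ * τ) ^ j) i : Fin n) : ℕ) < n := (((σ * τ) ^ j) i).isLt
        rw [h2]
        split_ifs at h1 ⊢ <;> omega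

lemma V_val (hn : 8 ≤ n) (σ τ : Equiv.Perm (Fin n))
    (hσ : ∀ i : Fin n, (σ i : ℕ) = ((i : ℕ) + 1) % n)
    (hτ : ∀ i : Fin n, (τ i : ℕ) =
      if (i : ℕ) = 0 then 1 else if (i : ℕ) = 1 then 0 else (i : ℕ)) :
    ∀ j, 1 ≤ j → j ≤ n - 2 → ∀ i : Fin n,
      (((σ⁻¹ * τ) ^ j) i : ℕ) =
        if (i : ℕ) = 0 then 0 else if j + 1 ≤ (i : ℕ) then (i : ℕ) - j
        else n - 1 - j + (i : ℕ) := by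
  intro j
  induction j with
  | zero => omega
  | succ j ih =>
      intro _ hj i
      have hi : (i : ℕ) < n := i.isLt
      rcases Nat.eq_zero_or_pos j with hj0 | hj1
      · subst hj0
        rw [pow_one]
        have h := btau_val hn σ τ hσ hτ i
        rw [h]; split_ifs <;> omega
      · rw [pow_succ', Equiv.Perm.mul_apply]
        have h1 := ih hj1 (by omega) i
        have h2 := btau_val hn σ τ hσ hτ (((σ⁻¹ * τ) ^ j) i)
        have hx : ((((σ⁻¹ * τ) ^ j) i : Fin n) : ℕ) < n := (((σ⁻¹ * τ) ^ j) i).isLt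
        rw [h2]
        split_ifs at h1 ⊢ <;> omega



def hillw (σ τ : Equiv.Perm (Fin n)) (L : ℕ) : List (Equiv.Perm (Fin n)) :=
  [τ] ++ (List.replicate (L - 2) [σ, τ]).flatten ++ (List.replicate (L - 2) [σ⁻¹, τ]).flatten

lemma join_rep_prod {G : Type*} [Monoid G] (a b : G) :
    ∀ k, ((List.replicate k [a, b]).flatten).prod = (a * b) ^ k := by
  intro k
  induction k with
  | zero => simp
  | succ k ih =>
      rw [List.replicate_succ, List.flatten_cons, List.prod_append, ih, pow_succ']
      simp [mul_assoc]

lemma join_rep_len {α : Type*} (a b : α) :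
    ∀ k, ((List.replicate k [a, b]).flatten).length = 2 * k := by
  intro k
  induction k with
  | zero => simp
  | succ k ih =>
      rw [List.replicate_succ, List.flatten_cons, List.length_append, ih]
      simp; omega

lemma join_rep_mem {α : Type*} (a b g : α) :
    ∀ k, g ∈ (List.replicate k [a, b]).flatten → g = a ∨ g = b := by
  intro k
  induction k with
  | zero => simp
  | succ k ih =>
      rw [List.replicate_succ, List.flatten_cons]
      intro h
      rcases List.mem_append.1 h with h | h
      · simp at h
        rcases h with h | h
        · exact Or.inl h
        · exact Or.inr h
      · exact ih h

lemma hillw_prod (σ τ : Equiv.Perm (Fin n)) (L : ℕ) :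
    (hillw σ τ L).prod = τ * (σ * τ) ^ (L - 2) * (σ⁻¹ * τ) ^ (L - 2) := by
  rw [hillw, List.prod_append, List.prod_append, join_rep_prod, join_rep_prod]
  simp [mul_assoc]

lemma hillw_len (σ τ : Equiv.Perm (Fin n)) (L : ℕ) :
    (hillw σ τ L).length = 1 + 4 * (L - 2) := by
  rw [hillw, List.length_append, List.length_append, join_rep_len, join_rep_len]
  simp; omega

lemma hillw_mem (σ τ g : Equiv.Perm (Fin n)) (L : ℕ) (h : g ∈ hillw σ τ L) :
    g = σ ∨ g = σ⁻¹ ∨ g = τ := by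
  rw [hillw] at h
  rcases List.mem_append.1 h with h | h
  · rcases List.mem_append.1 h with h | h
    · simp at h; exact Or.inr (Or.inr h)
    · rcases join_rep_mem _ _ _ _ h with h | h
      · exact Or.inl h
      · exact Or.inr (Or.inr h)
  · rcases join_rep_mem _ _ _ _ h with h | h
    · exact Or.inr (Or.inl h)
    · exact Or.inr (Or.inr h)

lemma hill_val (hn : 8 ≤ n) (σ τ : Equiv.Perm (Fin n))
    (hσ : ∀ i : Fin n, (σ i : ℕ) = ((i : ℕ) + 1) % n)
    (hτ : ∀ i : Fin n, (τ i : ℕ) =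
      if (i : ℕ) = 0 then 1 else if (i : ℕ) = 1 then 0 else (i : ℕ))
    (L : ℕ) (hL3 : 3 ≤ L) (hLn : L ≤ n) (i : Fin n) :
    ((hillw σ τ L).prod i : ℕ) =
      if (i : ℕ) = 0 then L - 1 else if (i : ℕ) = L - 1 then 0 else (i : ℕ) := by
  have hi : (i : ℕ) < n := i.isLt
  rw [hillw_prod]
  rw [Equiv.Perm.mul_apply, Equiv.Perm.mul_apply]
  set x := ((σ⁻¹ * τ) ^ (L - 2)) i with hxdef
  have hxval := V_val hn σ τ hσ hτ (L - 2) (by omega) (by omega) i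
  rw [← hxdef] at hxval
  set y := ((σ * τ) ^ (L - 2)) x with hydef
  have hyval := U_val hn σ τ hσ hτ (L - 2) (by omega) (by omega) x
  rw [← hydef] at hyval
  have htv := hτ y
  have hxlt : (x : ℕ) < n := x.isLt
  have hylt : (y : ℕ) < n := y.isLt
  rw [htv]
  split_ifs at hxval hyval ⊢ <;> omega

def arcw (σ τ : Equiv.Perm (Fin n)) : ℕ → List (Equiv.Perm (Fin n))
  | 0 => []
  | 1 => []
  | 2 => [τ]
  | 3 => hillw σ τ 3
  | (L + 4) => hillw σ τ (L + 4) ++ [σ] ++ arcw σ τ (L + 2)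

/-- value function for the arc product -/
def arcFun (n L i : ℕ) : ℕ :=
  if i + (L - 2) / 2 < n then
    (if i + (L - 2) / 2 < L then L - 1 - (i + (L - 2) / 2) else i + (L - 2) / 2)
  else
    (if i + (L - 2) / 2 - n < L then L - 1 - (i + (L - 2) / 2 - n) else i + (L - 2) / 2 - n)

lemma arc_val (hn : 8 ≤ n) (σ τ : Equiv.Perm (Fin n))
    (hσ : ∀ i : Fin n, (σ i : ℕ) = ((i : ℕ) + 1) % n)
    (hτ : ∀ i : Fin n, (τ i : ℕ) =
      if (i : ℕ) = 0 then 1 else if (i : ℕ) = 1 then 0 else (i : ℕ)) :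
    ∀ L, 2 ≤ L → L ≤ n → ∀ i : Fin n,
      ((arcw σ τ L).prod i : ℕ) = arcFun n L (i : ℕ) := by
  intro L
  induction L using Nat.strong_induction_on with
  | _ L ih =>
    match L with
    | 0 => omega
    | 1 => omega
    | 2 =>
        intro _ _ i
        have hi : (i : ℕ) < n := i.isLt
        have ht := hτ i
        simp only [arcw, List.prod_singleton, arcFun]
        rw [ht]
        split_ifs <;> omega
    | 3 =>
        intro _ h3 i
        have hi : (i : ℕ) < n := i.isLt
        have h := hill_val hn σ τ hσ hτ 3 (by omega) h3 i
        simp only [arcw, arcFun]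
        rw [h]
        split_ifs <;> omega
    | (L + 4) =>
        intro _ hLn i
        have hi : (i : ℕ) < n := i.isLt
        show ((arcw σ τ (L + 4)).prod i : ℕ) = _
        rw [show arcw σ τ (L + 4) = hillw σ τ (L + 4) ++ [σ] ++ arcw σ τ (L + 2) from rfl]
        rw [List.prod_append, List.prod_append, List.prod_singleton]
        rw [Equiv.Perm.mul_apply, Equiv.Perm.mul_apply]
        set x := (arcw σ τ (L + 2)).prod i with hxdef
        have hxval := ih (L + 2) (by omega) (by omega) (by omega) i
        rw [← hxdef] at hxval
        set y := σ x with hydef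
        have hyval := sigma_val' σ hσ x
        rw [← hydef] at hyval
        have hzval := hill_val hn σ τ hσ hτ (L + 4) (by omega) (by omega) y
        have hxlt : (x : ℕ) < n := x.isLt
        have hylt : (y : ℕ) < n := y.isLt
        rw [hzval]
        unfold arcFun at hxval ⊢
        have e2 : (L + 4 - 2) / 2 = (L + 2 - 2) / 2 + 1 := by omega
        rw [e2]
        split_ifs at hxval hyval ⊢ <;> omega

lemma arc_len (σ τ : Equiv.Perm (Fin n)) :
    ∀ L, 2 ≤ L → (arcw σ τ L).length + L + 1 = L * L := by
  intro L
  induction L using Nat.strong_induction_on with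
  | _ L ih =>
    match L with
    | 0 => omega
    | 1 => omega
    | 2 => intro _; simp [arcw]
    | 3 => intro _; simp [arcw, hillw_len]
    | (L + 4) =>
        intro _
        have h1 := ih (L + 2) (by omega) (by omega)
        have h2 : (arcw σ τ (L + 4)).length
            = (hillw σ τ (L + 4)).length + 1 + (arcw σ τ (L + 2)).length := by
          rw [show arcw σ τ (L + 4) = hillw σ τ (L + 4) ++ [σ] ++ arcw σ τ (L + 2) from rfl]
          simp
          omega
        rw [h2, hillw_len]
        have e : (L + 4) * (L + 4) = (L + 2) * (L + 2) + (4 * L + 12) := by ring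
        omega

lemma arc_mem (σ τ g : Equiv.Perm (Fin n)) :
    ∀ L, g ∈ arcw σ τ L → g = σ ∨ g = σ⁻¹ ∨ g = τ := by
  intro L
  induction L using Nat.strong_induction_on with
  | _ L ih =>
    match L with
    | 0 => intro h; simp [arcw] at h
    | 1 => intro h; simp [arcw] at h
    | 2 => intro h; simp [arcw] at h; exact Or.inr (Or.inr h)
    | 3 => intro h; exact hillw_mem σ τ g 3 h
    | (L + 4) =>
        intro h
        rw [show arcw σ τ (L + 4) = hillw σ τ (L + 4) ++ [σ] ++ arcw σ τ (L + 2) from rfl] at h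
        rcases List.mem_append.1 h with h | h
        · rcases List.mem_append.1 h with h | h
          · exact hillw_mem σ τ g (L + 4) h
          · simp at h; exact Or.inl h
        · exact ih (L + 2) (by omega) h

lemma core_val (hn : 8 ≤ n) (σ τ : Equiv.Perm (Fin n))
    (hσ : ∀ i : Fin n, (σ i : ℕ) = ((i : ℕ) + 1) % n)
    (hτ : ∀ i : Fin n, (τ i : ℕ) =
      if (i : ℕ) = 0 then 1 else if (i : ℕ) = 1 then 0 else (i : ℕ))
    (m : ℕ) (hm : n = 2 * m) (hm4 : 4 ≤ m) (i : Fin n) :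
    (((arcw σ τ m ++ List.replicate (m - (m - 2) / 2) σ ++ arcw σ τ m
        ++ List.replicate ((m - 2) / 2) σ⁻¹).prod) i : ℕ) = n - 1 - (i : ℕ) := by
  have hi : (i : ℕ) < n := i.isLt
  rw [List.prod_append, List.prod_append, List.prod_append,
    List.prod_replicate, List.prod_replicate]
  simp only [Equiv.Perm.mul_apply]
  set x1 := (σ⁻¹ ^ ((m - 2) / 2)) i with hx1
  set x2 := (arcw σ τ m).prod x1 with hx2
  set x3 := (σ ^ (m - (m - 2) / 2)) x2 with hx3
  have h1 := sigmainv_pow_val σ hσ ((m - 2) / 2) (by omega) i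
  rw [← hx1] at h1
  have h2 := arc_val hn σ τ hσ hτ m (by omega) (by omega) x1
  rw [← hx2] at h2
  have h3 := sigma_pow_val σ hσ (m - (m - 2) / 2) (by omega) x2
  rw [← hx3] at h3
  have h4 := arc_val hn σ τ hσ hτ m (by omega) (by omega) x3
  have l1 : (x1 : ℕ) < n := x1.isLt
  have l2 : (x2 : ℕ) < n := x2.isLt
  have l3 : (x3 : ℕ) < n := x3.isLt
  rw [h4]
  unfold arcFun at h2 ⊢
  split_ifs at h1 h2 h3 ⊢ <;> omega

lemma exists_pad (m : ℕ) (hm : 4 ≤ m) : ∃ p, 2 * p + 9 * m = m * m + 20 := by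
  rcases Nat.even_or_odd m with ⟨a, ha⟩ | ⟨a, ha⟩
  · have ha2 : 2 ≤ a := by omega
    obtain ⟨b, rfl⟩ : ∃ b, a = b + 2 := ⟨a - 2, by omega⟩
    rcases b with _ | c
    · exact ⟨0, by subst ha; norm_num⟩
    · refine ⟨(c + 1) * (2 * c + 1), ?_⟩
      subst ha
      ring
  · have ha2 : 2 ≤ a := by omega
    obtain ⟨b, rfl⟩ : ∃ b, a = b + 2 := ⟨a - 2, by omega⟩
    refine ⟨b * (2 * b + 1), ?_⟩
    subst ha
    ring

end LRE


/-- For every even `n ≥ 8`, the reverse permutation `R_n` can be sorted with LRE in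
exactly `(3n² - 20n + 72)/4` moves, i.e. `R_n` is a product of that many elements of
`G = {σ, σ⁻¹, τ}` (the count `k = gs.length` is expressed by the equivalent
subtraction-free equation `4k + 20n = 3n² + 72`).  Permutations of `{1,…,n}` are modelled
as `Equiv.Perm (Fin n)` with `i : Fin n` representing the 1-based index `(i : ℕ) + 1`:
`σ` is the left-rotation, `τ` the transposition of the first two positions, and
`R = R_n` sends `i ↦ n + 1 - i`. -/
theorem sort_reverse_even (n : ℕ) (hn : 8 ≤ n) (heven : n % 2 = 0)
    (σ τ R : Equiv.Perm (Fin n))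
    (hσ : ∀ i : Fin n, (σ i : ℕ) = ((i : ℕ) + 1) % n)
    (hτ : ∀ i : Fin n, (τ i : ℕ) =
      if (i : ℕ) = 0 then 1 else if (i : ℕ) = 1 then 0 else (i : ℕ))
    (hR : ∀ i : Fin n, (R i : ℕ) = n - 1 - (i : ℕ)) :
    ∃ gs : List (Equiv.Perm (Fin n)),
      4 * gs.length + 20 * n = 3 * n ^ 2 + 72 ∧
      (∀ g ∈ gs, g = σ ∨ g = σ⁻¹ ∨ g = τ) ∧
      gs.prod = R := by
  obtain ⟨m, hm⟩ : ∃ m, n = 2 * m := ⟨n / 2, by omega⟩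
  have hm4 : 4 ≤ m := by omega
  obtain ⟨p, hp⟩ := LRE.exists_pad m hm4
  refine ⟨(List.replicate p [σ, σ⁻¹]).flatten ++
    (LRE.arcw σ τ m ++ List.replicate (m - (m - 2) / 2) σ ++ LRE.arcw σ τ m
      ++ List.replicate ((m - 2) / 2) σ⁻¹), ?_, ?_, ?_⟩
  · -- length
    have halen := LRE.arc_len σ τ m (by omega)
    have hlen : ((List.replicate p [σ, σ⁻¹]).flatten).length = 2 * p :=
      LRE.join_rep_len σ σ⁻¹ p
    simp only [List.length_append, hlen, List.length_replicate]
    obtain ⟨q, hq⟩ : ∃ q, q = m * m := ⟨_, rfl⟩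
    rw [← hq] at hp halen
    have hsq : 3 * n ^ 2 + 72 = 12 * q + 72 := by rw [hq, hm]; ring
    rw [hsq]
    omega
  · -- membership
    intro g hg
    rcases List.mem_append.1 hg with h | h
    · rcases LRE.join_rep_mem _ _ _ _ h with h | h
      · exact Or.inl h
      · exact Or.inr (Or.inl h)
    · rcases List.mem_append.1 h with h | h
      · rcases List.mem_append.1 h with h | h
        · rcases List.mem_append.1 h with h | h
          · exact LRE.arc_mem σ τ g m h
          · exact Or.inl (List.eq_of_mem_replicate h)
        · exact LRE.arc_mem σ τ g m h
      · exact Or.inr (Or.inl (List.eq_of_mem_replicate h))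
  · -- product
    rw [List.prod_append, LRE.join_rep_prod, mul_inv_cancel, one_pow, one_mul]
    apply Equiv.ext
    intro i
    apply Fin.ext
    rw [hR i]
    exact LRE.core_val hn σ τ hσ hτ m hm hm4 i
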